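/- Let H ∈ (1/2,1), T > 0, a, b ∈ ℝ with a ≠ 0, and fix t ∈ (0,T]. Then for every ε ∈ (0,t), the series ∑_{k=1}^∞ (−1)^k (b/a)^k γ_k(t,s) converges uniformly for s ∈ [ε, t], and the series also converges in L²([0,T]) (as a function of s, with γ_k(t,s) = 0 for s ≥ t). -/

import Mathlib

open MeasureTheory Real Set Filter
open scoped ENNReal NNReal

/-- The normalizing constant `c(H)` of the Molchan–Golosov kernel. -/
noncomputable def cH (H : ℝ) : ℝ :=
  Real.sqrt (2 * H * Real.Gamma (3/2 - H) / (Real.Gamma (H + 1/2) * Real.Gamma (2 - 2*H)))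
    * (H - 1/2)

/-- The Molchan–Golosov kernel `K_H(t,s)`; it vanishes for `s ≥ t`. -/
noncomputable def KH (H t s : ℝ) : ℝ :=
  if s < t then
    cH H * s ^ (-(H - 1/2)) * ∫ u in s..t, u ^ (H - 1/2) * (u - s) ^ (H - 3/2)
  else 0

/-- The covariance function of fractional Brownian motion. -/
noncomputable def RH (H t s : ℝ) : ℝ :=
  (t ^ (2*H) + s ^ (2*H) - |t - s| ^ (2*H)) / 2

/-- The adjoint associated operator `K*_H` of the Molchan–Golosov kernel on `[0,T]`:
`(K*_H f)(t) = c(H)·t^{−(H−1/2)}·∫_t^T f(u)·u^{H−1/2}·(u−t)^{H−3/2} du`. -/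
noncomputable def Kstar (H T : ℝ) (f : ℝ → ℝ) (t : ℝ) : ℝ :=
  cH H * t ^ (-(H - 1/2)) * ∫ u in t..T, f u * u ^ (H - 1/2) * (u - t) ^ (H - 3/2)

/-- The functions `γ_k(t,s)` appearing in the Liouville–Neumann series of the
inverse kernel; with `α = H − 1/2`,
`γ_k(t,s) = (c(H)^k Γ(α)^k / Γ(kα)) · s^{−α} · ∫_s^t u^{α}(u−s)^{kα−1} du`
for `0 < s < t`, and `γ_k(t,s) = 0` for `s ≥ t`. -/
noncomputable def gam (H : ℝ) (k : ℕ) (t s : ℝ) : ℝ :=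
  if s < t then
    cH H ^ k * Real.Gamma (H - 1/2) ^ k / Real.Gamma (k * (H - 1/2)) *
      (s ^ (-(H - 1/2)) * ∫ u in s..t, u ^ (H - 1/2) * (u - s) ^ ((k : ℝ) * (H - 1/2) - 1))
  else 0

/-! ### Auxiliary definitions -/

/-- The `k`-th summand of the Liouville–Neumann series, as a function of `s`. -/
noncomputable def fse (H q t : ℝ) (k : ℕ) (s : ℝ) : ℝ :=
  (-1:ℝ)^(k+1) * q^(k+1) * gam H (k+1) t s

/-- A summable majorant sequence for the series. -/
noncomputable def vse (H q t : ℝ) (k : ℕ) : ℝ :=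
  (|q| * (|cH H| * Real.Gamma (H - 1/2) * t ^ (H - 1/2))) ^ (k+1) /
    Real.Gamma (((k:ℝ)+1) * (H - 1/2) + 1)

/-! ### Auxiliary lemmas -/

lemma gamma_ratio_le {α x : ℝ} (hα0 : 0 < α) (hα1 : α < 1) (hx : 0 < x) :
    Real.Gamma (x + 1) ≤ Real.Gamma (x + α) * (x + α) ^ (1 - α) := by
  have hxα : 0 < x + α := by linarith
  have hΓ1 : 0 < Real.Gamma (x + α) := Real.Gamma_pos_of_pos hxα
  have hΓ2 : 0 < Real.Gamma (x + 1) := Real.Gamma_pos_of_pos (by linarith)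
  have hconv := Real.convexOn_log_Gamma.2 (show x + α ∈ Ioi 0 from hxα)
      (show x + 1 + α ∈ Ioi 0 by simp only [mem_Ioi]; linarith)
      hα0.le (by linarith : (0:ℝ) ≤ 1 - α) (by ring)
  have hcomb : α • (x + α) + (1 - α) • (x + 1 + α) = x + 1 := by
    simp only [smul_eq_mul]; ring
  rw [hcomb] at hconv
  simp only [Function.comp_apply, smul_eq_mul] at hconv
  have hadd : Real.Gamma (x + 1 + α) = (x + α) * Real.Gamma (x + α) := by
    have := Real.Gamma_add_one (show x + α ≠ 0 by positivity)
    rw [show x + 1 + α = x + α + 1 by ring, this]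
  rw [hadd, Real.log_mul (by positivity) hΓ1.ne'] at hconv
  have key : Real.log (Real.Gamma (x + 1)) ≤
      Real.log (Real.Gamma (x + α)) + (1 - α) * Real.log (x + α) := by nlinarith [hconv]
  calc Real.Gamma (x + 1) = Real.exp (Real.log (Real.Gamma (x + 1))) := (Real.exp_log hΓ2).symm
    _ ≤ Real.exp (Real.log (Real.Gamma (x + α)) + (1 - α) * Real.log (x + α)) :=
        Real.exp_le_exp.2 key
    _ = Real.Gamma (x + α) * (x + α) ^ (1 - α) := by
        rw [Real.exp_add, Real.exp_log hΓ1, Real.rpow_def_of_pos hxα, mul_comm (Real.log _)]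

lemma summable_pow_div_gamma {α : ℝ} (hα0 : 0 < α) (hα1 : α < 1) {C : ℝ} (hC : 0 ≤ C) :
    Summable (fun k : ℕ => C ^ k / Real.Gamma ((k : ℝ) * α + 1)) := by
  apply summable_of_ratio_norm_eventually_le (r := 1/2) (by norm_num)
  obtain ⟨N, hN⟩ := exists_nat_ge (((2*C) ^ (1/α) + 1) / α)
  filter_upwards [eventually_ge_atTop (max N 1)] with k hk
  have hk1 : 1 ≤ k := le_of_max_le_right hk
  have hkN : (N : ℝ) ≤ k := Nat.cast_le.2 (le_of_max_le_left hk)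
  have hx : (0:ℝ) < (k:ℝ) * α := by
    have : (1:ℝ) ≤ (k:ℝ) := Nat.one_le_cast.2 hk1
    nlinarith
  have hxα : (0:ℝ) < (k:ℝ) * α + α := by positivity
  have hΓx : 0 < Real.Gamma ((k:ℝ) * α + 1) := Real.Gamma_pos_of_pos (by linarith)
  have hΓxα : 0 < Real.Gamma ((k:ℝ) * α + α) := Real.Gamma_pos_of_pos hxα
  have h2C : (2*C) ^ (1/α) ≤ (k:ℝ) * α + α := by
    have := (div_le_iff₀ hα0).1 hN
    nlinarith [Real.rpow_nonneg (by positivity : (0:ℝ) ≤ 2*C) (1/α)]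
  have h2C' : 2 * C ≤ ((k:ℝ) * α + α) ^ α := by
    have h1 : ((2*C) ^ (1/α)) ^ α ≤ ((k:ℝ) * α + α) ^ α :=
      Real.rpow_le_rpow (by positivity) h2C hα0.le
    rwa [← Real.rpow_mul (by positivity), one_div, inv_mul_cancel₀ hα0.ne',
      Real.rpow_one] at h1
  set y : ℝ := (k:ℝ) * α + α with hy
  have hGadd : Real.Gamma (((k:ℝ)+1) * α + 1) = y * Real.Gamma y := by
    rw [show ((k:ℝ)+1) * α + 1 = y + 1 by ring, Real.Gamma_add_one hxα.ne']
  have hratio := gamma_ratio_le hα0 hα1 hx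
  rw [show (k:ℝ) * α + α = y from rfl] at hratio
  have hPQ : y ^ α * y ^ (1-α) = y := by
    rw [← Real.rpow_add hxα]; norm_num
  have hΓy : 0 < Real.Gamma y := hΓxα
  have hP : (0:ℝ) ≤ y ^ (1-α) := Real.rpow_nonneg hxα.le _
  have hQ : (0:ℝ) ≤ y ^ α := Real.rpow_nonneg hxα.le _
  have hCk : (0:ℝ) ≤ C ^ k := by positivity
  have hnorm1 : ‖C ^ (k+1) / Real.Gamma (((k:ℝ)+1) * α + 1)‖
      = C ^ (k+1) / Real.Gamma (((k:ℝ)+1) * α + 1) := by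
    rw [Real.norm_of_nonneg]
    have : 0 < Real.Gamma (((k:ℝ)+1) * α + 1) := by rw [hGadd]; positivity
    positivity
  have hnorm2 : ‖C ^ k / Real.Gamma ((k:ℝ) * α + 1)‖
      = C ^ k / Real.Gamma ((k:ℝ) * α + 1) := by
    rw [Real.norm_of_nonneg]; positivity
  push_cast
  rw [hnorm1, hnorm2, hGadd,
    show (1:ℝ)/2 * (C ^ k / Real.Gamma ((k:ℝ) * α + 1))
      = (1/2 * C ^ k) / Real.Gamma ((k:ℝ) * α + 1) from by ring,
    div_le_div_iff₀ (by positivity) hΓx]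
  have key : C * y ^ (1-α) ≤ 1/2 * y := by nlinarith
  calc C ^ (k+1) * Real.Gamma ((k:ℝ) * α + 1)
      ≤ C ^ (k+1) * (Real.Gamma y * y ^ (1-α)) := by
        apply mul_le_mul_of_nonneg_left hratio (by positivity)
    _ = (C * y ^ (1-α)) * (C ^ k * Real.Gamma y) := by ring
    _ ≤ (1/2 * y) * (C ^ k * Real.Gamma y) := by
        apply mul_le_mul_of_nonneg_right key (by positivity)
    _ = 1/2 * C ^ k * (y * Real.Gamma y) := by ring

lemma intInt_shift {s t β : ℝ} (hβ : 0 < β) :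
    IntervalIntegrable (fun u => (u - s) ^ (β - 1)) volume s t := by
  have h := (intervalIntegral.intervalIntegrable_rpow' (a := 0) (b := t - s) (r := β - 1)
    (by linarith)).comp_sub_right s
  simpa using h

lemma integral_shift_rpow {s t β : ℝ} (hβ : 0 < β) :
    (∫ u in s..t, (u - s) ^ (β - 1)) = (t - s) ^ β / β := by
  rw [intervalIntegral.integral_comp_sub_right (fun x => x ^ (β - 1)) s,
    integral_rpow (Or.inl (by linarith))]
  rw [sub_self, Real.zero_rpow (by linarith : β - 1 + 1 ≠ 0)]
  norm_num

lemma intInt_main {s t α β : ℝ} (hs : 0 < s) (hst : s ≤ t) (hβ : 0 < β) :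
    IntervalIntegrable (fun u => u ^ α * (u - s) ^ (β - 1)) volume s t := by
  apply IntervalIntegrable.continuousOn_mul (intInt_shift hβ)
  apply ContinuousOn.rpow_const continuousOn_id
  intro x hx
  left
  rw [uIcc_of_le hst] at hx
  exact ne_of_gt (lt_of_lt_of_le hs hx.1)

lemma integral_nonneg_main {s t α β : ℝ} (hs : 0 < s) (hst : s ≤ t) :
    0 ≤ ∫ u in s..t, u ^ α * (u - s) ^ (β - 1) := by
  apply intervalIntegral.integral_nonneg hst
  intro u hu
  have hu0 : (0:ℝ) ≤ u := le_trans hs.le hu.1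
  have : (0:ℝ) ≤ u - s := by linarith [hu.1]
  positivity

lemma integral_le_main {s t α β : ℝ} (hα0 : 0 < α) (hs : 0 < s) (hst : s ≤ t) (hβ : 0 < β) :
    (∫ u in s..t, u ^ α * (u - s) ^ (β - 1)) ≤ t ^ α * ((t - s) ^ β / β) := by
  have h1 : (∫ u in s..t, u ^ α * (u - s) ^ (β - 1))
      ≤ ∫ u in s..t, t ^ α * (u - s) ^ (β - 1) := by
    apply intervalIntegral.integral_mono_on hst (intInt_main hs hst hβ)
      ((intInt_shift hβ).const_mul _)
    intro u hu
    have hu0 : (0:ℝ) ≤ u := le_trans hs.le hu.1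
    have h2 : (0:ℝ) ≤ (u - s) ^ (β - 1) := Real.rpow_nonneg (by linarith [hu.1]) _
    exact mul_le_mul_of_nonneg_right (Real.rpow_le_rpow hu0 hu.2 hα0.le) h2
  rw [intervalIntegral.integral_const_mul, integral_shift_rpow hβ] at h1
  exact h1

lemma gam_bound {H t : ℝ} (hH : H ∈ Set.Ioo (1/2:ℝ) 1) (ht0 : 0 < t)
    {s : ℝ} (hs0 : 0 < s) (hst : s < t) {k : ℕ} (hk : 1 ≤ k) :
    |gam H k t s| ≤ (|cH H| * Real.Gamma (H - 1/2) * t ^ (H - 1/2)) ^ k /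
      Real.Gamma ((k:ℝ) * (H - 1/2) + 1) * (t ^ (H - 1/2) * s ^ (-(H - 1/2))) := by
  obtain ⟨hH1, hH2⟩ := hH
  set α : ℝ := H - 1/2 with hα
  have hα0 : 0 < α := by rw [hα]; linarith
  have hk0 : (0:ℝ) < (k:ℝ) := by exact_mod_cast hk
  set β : ℝ := (k:ℝ) * α with hβdef
  have hβ : 0 < β := by positivity
  rw [gam, if_pos hst]
  set I := ∫ u in s..t, u ^ α * (u - s) ^ (β - 1) with hI
  have hI0 : 0 ≤ I := integral_nonneg_main hs0 hst.le
  have hIle : I ≤ t ^ α * ((t - s) ^ β / β) := integral_le_main hα0 hs0 hst.le hβ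
  have hΓα : 0 < Real.Gamma α := Real.Gamma_pos_of_pos hα0
  have hΓβ : 0 < Real.Gamma β := Real.Gamma_pos_of_pos hβ
  have hsneg : 0 < s ^ (-α) := Real.rpow_pos_of_pos hs0 _
  have habs : |cH H ^ k * Real.Gamma α ^ k / Real.Gamma β * (s ^ (-α) * I)|
      = |cH H| ^ k * Real.Gamma α ^ k / Real.Gamma β * (s ^ (-α) * I) := by
    rw [abs_mul, abs_div, abs_mul, abs_pow, abs_pow, abs_of_pos hΓα, abs_of_pos hΓβ,
      abs_mul, abs_of_pos hsneg, abs_of_nonneg hI0]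
  rw [habs]
  have hts : (t - s) ^ β ≤ t ^ β := Real.rpow_le_rpow (by linarith) (by linarith) hβ.le
  have step1 : |cH H| ^ k * Real.Gamma α ^ k / Real.Gamma β * (s ^ (-α) * I)
      ≤ |cH H| ^ k * Real.Gamma α ^ k / Real.Gamma β * (s ^ (-α) * (t ^ α * (t ^ β / β))) := by
    gcongr
    calc I ≤ t ^ α * ((t - s) ^ β / β) := hIle
      _ ≤ t ^ α * (t ^ β / β) := by gcongr
  refine step1.trans (le_of_eq ?_)
  have hΓβ1 : Real.Gamma (β + 1) = β * Real.Gamma β := Real.Gamma_add_one hβ.ne'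
  have htβ : t ^ β = (t ^ α) ^ k := by
    rw [hβdef, mul_comm, Real.rpow_mul ht0.le, Real.rpow_natCast]
  rw [hΓβ1, htβ, mul_pow, mul_pow]
  field_simp

section

variable {H T q t : ℝ}

lemma vse_nonneg (hH : H ∈ Set.Ioo (1/2:ℝ) 1) (ht0 : 0 < t) (k : ℕ) : 0 ≤ vse H q t k := by
  have hΓ : 0 < Real.Gamma (((k:ℝ)+1) * (H - 1/2) + 1) := by
    apply Real.Gamma_pos_of_pos
    have : (0:ℝ) < H - 1/2 := by linarith [hH.1]
    positivity
  have htα : (0:ℝ) ≤ t ^ (H - 1/2) := Real.rpow_nonneg ht0.le _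
  have hΓα : (0:ℝ) ≤ Real.Gamma (H - 1/2) :=
    (Real.Gamma_pos_of_pos (by linarith [hH.1] : (0:ℝ) < H - 1/2)).le
  rw [vse]
  apply div_nonneg _ hΓ.le
  apply pow_nonneg
  exact mul_nonneg (abs_nonneg q)
    (mul_nonneg (mul_nonneg (abs_nonneg _) hΓα) htα)

lemma vse_summable (hH : H ∈ Set.Ioo (1/2:ℝ) 1) (ht0 : 0 < t) : Summable (vse H q t) := by
  obtain ⟨hH1, hH2⟩ := hH
  have hΓα : 0 < Real.Gamma (H - 1/2) := Real.Gamma_pos_of_pos (by linarith)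
  have htα : (0:ℝ) ≤ t ^ (H - 1/2) := Real.rpow_nonneg ht0.le _
  have h1 : Summable (fun k : ℕ =>
      (|q| * (|cH H| * Real.Gamma (H - 1/2) * t ^ (H - 1/2))) ^ (k+1) /
      Real.Gamma (((k+1:ℕ) : ℝ) * (H - 1/2) + 1)) :=
    (summable_nat_add_iff 1).2
      (summable_pow_div_gamma (by linarith) (by linarith) (by positivity))
  apply h1.congr
  intro k
  rw [vse]
  push_cast
  rfl

lemma fse_abs_le (hH : H ∈ Set.Ioo (1/2:ℝ) 1) (ht0 : 0 < t) (k : ℕ)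
    {s : ℝ} (hs : s ∈ Ioo (0:ℝ) t) :
    |fse H q t k s| ≤ vse H q t k * (t ^ (H - 1/2) * s ^ (-(H - 1/2))) := by
  have hgb := gam_bound hH ht0 hs.1 hs.2 (k := k + 1) (Nat.le_add_left 1 k)
  have habs : |fse H q t k s| = |q| ^ (k+1) * |gam H (k+1) t s| := by
    rw [fse]
    simp only [abs_mul, abs_pow, abs_neg, abs_one, one_pow, one_mul]
  rw [habs, vse]
  push_cast at hgb ⊢
  calc |q| ^ (k+1) * |gam H (k+1) t s|
      ≤ |q| ^ (k+1) * ((|cH H| * Real.Gamma (H - 1/2) * t ^ (H - 1/2)) ^ (k+1) /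
          Real.Gamma (((k:ℝ)+1) * (H - 1/2) + 1) * (t ^ (H - 1/2) * s ^ (-(H - 1/2)))) :=
        mul_le_mul_of_nonneg_left hgb (by positivity)
    _ = (|q| * (|cH H| * Real.Gamma (H - 1/2) * t ^ (H - 1/2))) ^ (k+1) /
          Real.Gamma (((k:ℝ)+1) * (H - 1/2) + 1) * (t ^ (H - 1/2) * s ^ (-(H - 1/2))) := by
        rw [mul_pow]; ring

lemma fse_zero (k : ℕ) {s : ℝ} (hs : t ≤ s) : fse H q t k s = 0 := by
  rw [fse, gam, if_neg (not_lt.2 hs), mul_zero]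

lemma fse_summable (hH : H ∈ Set.Ioo (1/2:ℝ) 1) (ht0 : 0 < t)
    {s : ℝ} (hs : s ∈ Ioo (0:ℝ) t) : Summable (fun k => fse H q t k s) := by
  apply Summable.of_norm_bounded
    ((vse_summable hH ht0).mul_right (t ^ (H - 1/2) * s ^ (-(H - 1/2))))
  intro k
  rw [Real.norm_eq_abs]
  exact fse_abs_le hH ht0 k hs

lemma fse_tail_bound (hH : H ∈ Set.Ioo (1/2:ℝ) 1) (ht0 : 0 < t) (n : ℕ)
    {s : ℝ} (hs0 : 0 < s) :
    |(∑ k ∈ Finset.range n, fse H q t k s) - ∑' k, fse H q t k s|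
      ≤ ((∑' k, vse H q t (k + n)) * t ^ (H - 1/2)) * s ^ (-(H - 1/2)) := by
  have hφ0 : (0:ℝ) ≤ s ^ (-(H - 1/2)) := Real.rpow_nonneg hs0.le _
  have ht0' : (0:ℝ) ≤ t ^ (H - 1/2) := Real.rpow_nonneg ht0.le _
  have hR0 : 0 ≤ ∑' k, vse H q t (k + n) :=
    tsum_nonneg (fun k => vse_nonneg hH ht0 _)
  rcases lt_or_ge s t with hst | hst
  · have hsum := fse_summable (q := q) hH ht0 ⟨hs0, hst⟩
    have hkey : (∑' k, fse H q t k s) - (∑ k ∈ Finset.range n, fse H q t k s)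
        = ∑' k, fse H q t (k + n) s := by
      have h := Summable.sum_add_tsum_nat_add (f := fun k => fse H q t k s) n hsum
      linarith [h]
    rw [abs_sub_comm, hkey]
    have hle : ∀ k : ℕ, ‖fse H q t (k + n) s‖
        ≤ vse H q t (k + n) * (t ^ (H - 1/2) * s ^ (-(H - 1/2))) := by
      intro k
      rw [Real.norm_eq_abs]
      exact fse_abs_le hH ht0 (k + n) ⟨hs0, hst⟩
    have hs1 : Summable (fun k : ℕ =>
        vse H q t (k + n) * (t ^ (H - 1/2) * s ^ (-(H - 1/2)))) :=
      ((summable_nat_add_iff n).2 (vse_summable hH ht0)).mul_right _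
    have hsn : Summable (fun k => ‖fse H q t (k + n) s‖) :=
      Summable.of_nonneg_of_le (fun k => norm_nonneg _) hle hs1
    calc |∑' k, fse H q t (k + n) s| ≤ ∑' k, ‖fse H q t (k + n) s‖ :=
        norm_tsum_le_tsum_norm hsn
      _ ≤ ∑' k, vse H q t (k + n) * (t ^ (H - 1/2) * s ^ (-(H - 1/2))) :=
          Summable.tsum_le_tsum hle hsn hs1
      _ = ((∑' k, vse H q t (k + n)) * t ^ (H - 1/2)) * s ^ (-(H - 1/2)) := by
          rw [tsum_mul_right]; ring
  · have hgz : (∑' k, fse H q t k s) = 0 := by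
      have : ∀ k, fse H q t k s = 0 := fun k => fse_zero k hst
      simp [this]
    have hSz : (∑ k ∈ Finset.range n, fse H q t k s) = 0 :=
      Finset.sum_eq_zero (fun k _ => fse_zero k hst)
    rw [hgz, hSz, sub_zero, abs_zero]
    positivity

end

/-- The series `∑_{k≥1} (−1)^k (b/a)^k γ_k(t,·)` converges uniformly on `[ε,t]` for every
`ε ∈ (0,t)`, and also converges in `L²([0,T])`. -/
theorem series_gam_converges (H T a b t : ℝ) (hH : H ∈ Set.Ioo (1/2 : ℝ) 1) (hT : 0 < T)
    (ha : a ≠ 0) (ht : t ∈ Set.Ioc (0:ℝ) T) :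
    ∃ g : ℝ → ℝ,
      (∀ ε : ℝ, ε ∈ Set.Ioo (0:ℝ) t →
        TendstoUniformlyOn
          (fun n s => ∑ k ∈ Finset.range n, (-1:ℝ)^(k+1) * (b/a)^(k+1) * gam H (k+1) t s)
          g Filter.atTop (Set.Icc ε t)) ∧
      Filter.Tendsto
        (fun n => eLpNorm
          (fun s => (∑ k ∈ Finset.range n, (-1:ℝ)^(k+1) * (b/a)^(k+1) * gam H (k+1) t s) - g s)
          2 (volume.restrict (Set.Ioc (0:ℝ) T)))
        Filter.atTop (nhds 0) := by
  obtain ⟨ht0, htT⟩ := ht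
  have hH1 := hH.1
  have hH2 := hH.2
  have hα0 : 0 < H - 1/2 := by linarith
  have hα12 : H - 1/2 < 1/2 := by linarith
  refine ⟨fun s => ∑' k, fse H (b/a) t k s, ?_, ?_⟩
  · -- uniform convergence on [ε, t]
    intro ε hε
    have hmain : TendstoUniformlyOn
        (fun n s => ∑ k ∈ Finset.range n, fse H (b/a) t k s)
        (fun s => ∑' k, fse H (b/a) t k s) Filter.atTop (Set.Icc ε t) := by
      apply tendstoUniformlyOn_tsum_nat
        ((vse_summable hH ht0).mul_right (t ^ (H - 1/2) * ε ^ (-(H - 1/2))))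
      intro k s hs
      rw [Real.norm_eq_abs]
      rcases lt_or_ge s t with hst | hst
      · have hs0 : 0 < s := lt_of_lt_of_le hε.1 hs.1
        calc |fse H (b/a) t k s| ≤ vse H (b/a) t k * (t ^ (H - 1/2) * s ^ (-(H - 1/2))) :=
            fse_abs_le hH ht0 k ⟨hs0, hst⟩
          _ ≤ vse H (b/a) t k * (t ^ (H - 1/2) * ε ^ (-(H - 1/2))) := by
              have h0 : s ^ (-(H - 1/2)) ≤ ε ^ (-(H - 1/2)) :=
                Real.rpow_le_rpow_of_nonpos hε.1 hs.1 (by linarith)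
              have h1 : (0:ℝ) ≤ t ^ (H - 1/2) := Real.rpow_nonneg ht0.le _
              have h2 := vse_nonneg (q := b/a) hH ht0 k
              exact mul_le_mul_of_nonneg_left (mul_le_mul_of_nonneg_left h0 h1) h2
      · rw [fse_zero k hst, abs_zero]
        have h0 : (0:ℝ) ≤ ε ^ (-(H - 1/2)) := Real.rpow_nonneg hε.1.le _
        have h1 : (0:ℝ) ≤ t ^ (H - 1/2) := Real.rpow_nonneg ht0.le _
        have h2 := vse_nonneg (q := b/a) hH ht0 k
        positivity
    exact hmain
  · -- L² convergence
    have hR0 : ∀ n : ℕ, 0 ≤ ∑' k, vse H (b/a) t (k + n) :=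
      fun n => tsum_nonneg (fun k => vse_nonneg hH ht0 _)
    have hφint : IntegrableOn (fun s : ℝ => s ^ (-(H - 1/2))) (Ioc (0:ℝ) T) := by
      rw [← intervalIntegrable_iff_integrableOn_Ioc_of_le hT.le]
      exact intervalIntegral.intervalIntegrable_rpow' (by linarith)
    have hφmeas : AEStronglyMeasurable (fun s : ℝ => s ^ (-(H - 1/2)))
        (volume.restrict (Ioc (0:ℝ) T)) := hφint.aestronglyMeasurable
    have hφL2 : eLpNorm (fun s : ℝ => s ^ (-(H - 1/2))) 2 (volume.restrict (Ioc (0:ℝ) T))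
        ≠ ⊤ := by
      have hint : IntegrableOn (fun s : ℝ => (s ^ (-(H - 1/2))) ^ 2) (Ioc (0:ℝ) T) := by
        have h1 : IntegrableOn (fun s : ℝ => s ^ (-(2 * (H - 1/2)))) (Ioc (0:ℝ) T) := by
          rw [← intervalIntegrable_iff_integrableOn_Ioc_of_le hT.le]
          exact intervalIntegral.intervalIntegrable_rpow' (by linarith)
        apply h1.congr_fun _ measurableSet_Ioc
        intro s hs
        show s ^ (-(2 * (H - 1/2))) = (s ^ (-(H - 1/2))) ^ 2
        rw [show -(2 * (H - 1/2)) = (-(H - 1/2)) + (-(H - 1/2)) by ring,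
          Real.rpow_add hs.1, pow_two]
      have hmem : MemLp (fun s : ℝ => s ^ (-(H - 1/2))) 2
          (volume.restrict (Ioc (0:ℝ) T)) :=
        (memLp_two_iff_integrable_sq hφmeas).2 hint
      exact hmem.2.ne
    have hmain : Filter.Tendsto
        (fun n => eLpNorm
          (fun s => (∑ k ∈ Finset.range n, fse H (b/a) t k s) - ∑' k, fse H (b/a) t k s)
          2 (volume.restrict (Set.Ioc (0:ℝ) T)))
        Filter.atTop (nhds 0) := by
      apply tendsto_of_tendsto_of_tendsto_of_le_of_le
        (g := fun _ : ℕ => (0:ℝ≥0∞))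
        (h := fun n => (‖(∑' k, vse H (b/a) t (k + n)) * t ^ (H - 1/2)‖₊ : ℝ≥0∞) *
          eLpNorm (fun s : ℝ => s ^ (-(H - 1/2))) 2 (volume.restrict (Ioc (0:ℝ) T)))
        tendsto_const_nhds
      · have hRlim : Tendsto (fun n : ℕ => ∑' k, vse H (b/a) t (k + n)) atTop (nhds 0) :=
          tendsto_sum_nat_add (vse H (b/a) t)
        have h2 : Tendsto (fun n : ℕ => (∑' k, vse H (b/a) t (k + n)) * t ^ (H - 1/2))
            atTop (nhds 0) := by
          simpa using hRlim.mul_const (t ^ (H - 1/2))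
        have h3 : Tendsto (fun n : ℕ =>
            (‖(∑' k, vse H (b/a) t (k + n)) * t ^ (H - 1/2)‖₊ : ℝ≥0∞)) atTop (nhds 0) := by
          rw [show (0:ℝ≥0∞) = ((0:ℝ≥0) : ℝ≥0∞) from rfl, ENNReal.tendsto_coe]
          have h4 := (continuous_nnnorm.tendsto (0:ℝ)).comp h2
          rw [show ‖(0:ℝ)‖₊ = 0 by simp] at h4
          exact h4
        have h5 := ENNReal.Tendsto.mul_const h3 (Or.inr hφL2)
        simpa using h5
      · exact fun n => zero_le
      · intro n
        calc eLpNorm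
              (fun s => (∑ k ∈ Finset.range n, fse H (b/a) t k s) - ∑' k, fse H (b/a) t k s) 2
              (volume.restrict (Ioc (0:ℝ) T))
            ≤ eLpNorm (((∑' k, vse H (b/a) t (k + n)) * t ^ (H - 1/2)) •
                (fun s : ℝ => s ^ (-(H - 1/2)))) 2 (volume.restrict (Ioc (0:ℝ) T)) := by
              apply eLpNorm_mono_ae
              rw [ae_restrict_iff' measurableSet_Ioc]
              apply ae_of_all
              intro s hs
              rw [Real.norm_eq_abs, Real.norm_eq_abs, Pi.smul_apply, smul_eq_mul]
              calc |(∑ k ∈ Finset.range n, fse H (b/a) t k s) - ∑' k, fse H (b/a) t k s|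
                  ≤ ((∑' k, vse H (b/a) t (k + n)) * t ^ (H - 1/2)) * s ^ (-(H - 1/2)) :=
                    fse_tail_bound hH ht0 n hs.1
                _ ≤ |((∑' k, vse H (b/a) t (k + n)) * t ^ (H - 1/2)) * s ^ (-(H - 1/2))| :=
                    le_abs_self _
          _ = (‖(∑' k, vse H (b/a) t (k + n)) * t ^ (H - 1/2)‖₊ : ℝ≥0∞) *
                eLpNorm (fun s : ℝ => s ^ (-(H - 1/2))) 2 (volume.restrict (Ioc (0:ℝ) T)) :=
              eLpNorm_const_smul _ _ _ _
    exact hmain
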